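/- The limit lim_{t→∞} P(0,t) exists and equals (m+A)/(m+A+mA), where P(0,t) is the full network degree distribution at degree 0. -/

import Mathlib

open Finset Filter Topology

lemma binom_bound' (m : ℕ) (x : ℝ) (hx0 : 0 ≤ x) (hx1 : x ≤ 1) :
    |(1-x)^m - 1 + m*x| ≤ 2^m * x^2 := by
  induction m with
  | zero => simp [sq_nonneg]
  | succ n ih =>
    have key : (1-x)^(n+1) - 1 + ((n:ℝ)+1)*x
        = (1-x)*((1-x)^n - 1 + n*x) + n*x^2 := by ring
    push_cast
    rw [key]
    have h1 : |1 - x| ≤ 1 := by rw [abs_le]; constructor <;> linarith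
    have h2 : |(1-x)*((1-x)^n - 1 + n*x)| ≤ 2^n * x^2 := by
      rw [abs_mul]
      calc |1-x| * |(1-x)^n - 1 + n*x| ≤ 1 * (2^n * x^2) := by
            apply mul_le_mul h1 ih (abs_nonneg _) zero_le_one
        _ = 2^n * x^2 := by ring
    have h3 : (n:ℝ) ≤ 2^n := by exact_mod_cast Nat.le_of_lt (Nat.lt_two_pow_self (n := n))
    calc |(1-x)*((1-x)^n - 1 + n*x) + n*x^2|
        ≤ |(1-x)*((1-x)^n - 1 + n*x)| + |(n:ℝ)*x^2| := abs_add_le _ _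
      _ ≤ 2^n * x^2 + (n:ℝ)*x^2 := by
          refine add_le_add h2 ?_
          rw [abs_of_nonneg (by positivity)]
      _ ≤ 2^(n+1) * x^2 := by
          have h4 : (2:ℝ)^(n+1) = 2^n + 2^n := by ring
          nlinarith [mul_le_mul_of_nonneg_right h3 (sq_nonneg x)]

lemma sqrt_natCast_atTop : Tendsto (fun t : ℕ => Real.sqrt t) atTop atTop := by
  have h : Tendsto Real.sqrt atTop atTop := by
    apply tendsto_atTop_atTop.mpr
    intro b
    exact ⟨b^2, fun a ha => by
      calc b ≤ |b| := le_abs_self b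
        _ = Real.sqrt (b^2) := (Real.sqrt_sq_eq_abs b).symm
        _ ≤ Real.sqrt a := Real.sqrt_le_sqrt ha⟩
  exact h.comp tendsto_natCast_atTop_atTop

set_option maxHeartbeats 1000000 in
lemma main_rec_aux (m : ℕ) (a L : ℝ) (ha0 : 0 < a) (ha1 : a < 1)
    (hL : L * (1 + m*a) = 1)
    (S : ℕ → ℝ) (hS1 : S 1 = 0)
    (hrec : ∀ t : ℕ, 1 ≤ t → S (t+1) = 1 + (1 - a/(t:ℝ))^m * S t) :
    Tendsto (fun t : ℕ => S t / t) atTop (𝓝 L) := by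
  have hma : (0:ℝ) ≤ (m:ℝ)*a := by positivity
  have hpos : (0:ℝ) < 1 + m*a := by linarith
  have hL0 : 0 < L := by nlinarith
  have hL1 : L ≤ 1 := by nlinarith
  set C : ℝ := 2^m with hC
  have hC1 : (1:ℝ) ≤ C := one_le_pow₀ (by norm_num)
  set u : ℕ → ℝ := fun t => S t - L * t with hu
  have step : ∀ t : ℕ, 1 ≤ t → |u (t+1)| ≤ |u t| + C / t := by
    intro t ht
    have htR : (1:ℝ) ≤ (t:ℝ) := by exact_mod_cast ht
    have ht0 : (0:ℝ) < t := by linarith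
    have ht' : (t:ℝ) ≠ 0 := ne_of_gt ht0
    set x : ℝ := a / t with hx
    have hx0 : 0 ≤ x := by positivity
    have hx1 : x ≤ 1 := by rw [hx, div_le_one ht0]; linarith
    have hxt : x * t = a := div_mul_cancel₀ a ht'
    have hr0 : (0:ℝ) ≤ (1-x)^m := pow_nonneg (by linarith) m
    have hr1 : (1-x)^m ≤ 1 := pow_le_one₀ (by linarith) (by linarith)
    have hE := binom_bound' m x hx0 hx1
    have hid : u (t+1) = (1-x)^m * u t + ((1-x)^m - 1 + m*x) * (L * t) := by
      simp only [hu]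
      rw [hrec t ht, ← hx]
      push_cast
      linear_combination (-(m:ℝ)*L) * hxt - hL
    have herr : |((1-x)^m - 1 + m*x) * (L * t)| ≤ C / t := by
      rw [abs_mul, abs_of_nonneg (by positivity : (0:ℝ) ≤ L * t)]
      have h5 : |(1-x)^m - 1 + m*x| * (L*t) ≤ (C * x^2) * (L*t) :=
        mul_le_mul_of_nonneg_right hE (by positivity)
      refine h5.trans ?_
      have e1 : (C * x^2) * (L*t) = C * (a^2*L) / t := by
        rw [hx]; field_simp
      rw [e1]
      gcongr
      have h6 : a^2*L ≤ 1 := by nlinarith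
      nlinarith [mul_nonneg (le_trans zero_le_one hC1) (sub_nonneg.mpr h6)]
    calc |u (t+1)| = |(1-x)^m * u t + ((1-x)^m - 1 + m*x) * (L*t)| := by rw [hid]
      _ ≤ |(1-x)^m * u t| + |((1-x)^m - 1 + m*x) * (L*t)| := abs_add_le _ _
      _ ≤ |u t| + C/t := by
          refine add_le_add ?_ herr
          rw [abs_mul, abs_of_nonneg hr0]
          exact mul_le_of_le_one_left (abs_nonneg _) hr1
  set K : ℝ := 1 + 3*C with hK
  have hK0 : (0:ℝ) < K := by rw [hK]; linarith
  have hK3 : 3*C ≤ K := by rw [hK]; linarith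
  have ubound : ∀ t : ℕ, 1 ≤ t → |u t| ≤ K * Real.sqrt t := by
    intro t
    induction t with
    | zero => intro h; exact absurd h (by norm_num)
    | succ n ih =>
      intro _
      rcases Nat.eq_zero_or_pos n with hn | hn
      · subst hn
        have : |u 1| = L := by
          simp only [hu, hS1]
          push_cast
          rw [show (0:ℝ) - L * 1 = -L by ring, abs_neg, abs_of_nonneg hL0.le]
        rw [this]
        push_cast
        rw [Real.sqrt_one]
        linarith
      · have hnR : (1:ℝ) ≤ n := by exact_mod_cast hn
        have hn0 : (0:ℝ) < n := by linarith
        have h1 := step n hn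
        have h2 := ih hn
        push_cast
        set s := Real.sqrt n with hs
        set s' := Real.sqrt ((n:ℝ)+1) with hs'
        have hs2 : s^2 = n := Real.sq_sqrt (by positivity)
        have hs'2 : s'^2 = (n:ℝ)+1 := Real.sq_sqrt (by positivity)
        have hs1 : 1 ≤ s := Real.one_le_sqrt.mpr hnR
        have hs'0 : 0 ≤ s' := Real.sqrt_nonneg _
        have hss : s ≤ s' := Real.sqrt_le_sqrt (by linarith)
        have hsu : s' ≤ s + 1 := by nlinarith [hs2, hs'2, hs'0, hs1, sq_nonneg (s' - (s+1))]
        have hprod : (s' - s) * (s' + s) = 1 := by linear_combination hs'2 - hs2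
        have hd : K * (1/(3*s)) ≤ K * (s' - s) := by
          apply mul_le_mul_of_nonneg_left ?_ hK0.le
          rw [div_le_iff₀ (by linarith : (0:ℝ) < 3*s)]
          nlinarith [hprod, mul_nonneg (sub_nonneg.mpr hss) (by linarith : (0:ℝ) ≤ 3*s - (s'+s))]
        have hCn : C / (n:ℝ) ≤ K * (1/(3*s)) := by
          rw [mul_one_div, div_le_div_iff₀ hn0 (by linarith : (0:ℝ) < 3*s)]
          nlinarith [hs2, mul_nonneg (mul_nonneg (by linarith : (0:ℝ) ≤ 3*C) (by linarith : (0:ℝ) ≤ s)) (by linarith : (0:ℝ) ≤ s - 1), mul_nonneg (by linarith : (0:ℝ) ≤ K - 3*C) (sq_nonneg s)]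
        calc |u (n+1)| ≤ |u n| + C/n := h1
          _ ≤ K*s + K*(1/(3*s)) := add_le_add h2 hCn
          _ ≤ K*s + K*(s'-s) := by linarith
          _ = K*s' := by ring
  have hfin : ∀ t : ℕ, 1 ≤ t → |S t / t - L| ≤ K / Real.sqrt t := by
    intro t ht
    have htR : (1:ℝ) ≤ t := by exact_mod_cast ht
    have ht0 : (0:ℝ) < t := by linarith
    have hsq : (0:ℝ) < Real.sqrt t := Real.sqrt_pos.mpr ht0
    have he : S t / t - L = u t / t := by
      simp only [hu]
      field_simp
    rw [he, abs_div, abs_of_nonneg ht0.le, div_le_div_iff₀ ht0 hsq]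
    have hb := ubound t ht
    have hmul : Real.sqrt t * Real.sqrt t = t := Real.mul_self_sqrt ht0.le
    nlinarith [mul_le_mul_of_nonneg_right hb hsq.le]
  have h0 : Tendsto (fun t : ℕ => K / Real.sqrt t) atTop (𝓝 0) :=
    Tendsto.div_atTop tendsto_const_nhds sqrt_natCast_atTop
  have h1 : Tendsto (fun t : ℕ => S t / t - L) atTop (𝓝 0) := by
    apply squeeze_zero_norm' ?_ h0
    filter_upwards [eventually_ge_atTop 1] with t ht
    simpa [Real.norm_eq_abs] using hfin t ht
  have h2 := h1.add_const L
  simpa using h2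

/-- the network degree distribution at degree 0 converges to
`(m+A)/(m+A+mA)`. -/
theorem dms_network_limit_deg_zero
    (m : ℕ) (hm : 1 ≤ m) (A : ℝ) (hA : 0 < A)
    (P : ℕ → ℕ → ℕ → ℝ)
    (hP11 : ∀ q : ℕ, P q 1 1 = if q = m then 1 else 0)
    (hPii : ∀ q i : ℕ, 2 ≤ i → P q i i = if q = 0 then 1 else 0)
    (hPrec : ∀ q i t : ℕ, 1 ≤ i → i ≤ t →
      P q i (t + 1) = ∑ j ∈ Finset.Icc 0 (min m q),
        (m.choose j : ℝ) * (((q : ℝ) - (j : ℝ) + A) / ((m + A) * t)) ^ j *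
          (1 - ((q : ℝ) - (j : ℝ) + A) / ((m + A) * t)) ^ (m - j) * P (q - j) i t)
    (Pnet : ℕ → ℕ → ℝ)
    (hPnet : ∀ q t : ℕ, 1 ≤ t →
      Pnet q t = (1 / (t : ℝ)) * ∑ i ∈ Finset.Icc 1 t, P q i t) :
    Filter.Tendsto (fun t : ℕ => Pnet 0 t) Filter.atTop
      (nhds (((m : ℝ) + A) / ((m : ℝ) + A + (m : ℝ) * A))) := by
  have hm1 : (1:ℝ) ≤ (m:ℝ) := by exact_mod_cast hm
  have hmA : (0:ℝ) < (m:ℝ) + A := by linarith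
  have hmApos : (0:ℝ) < (m:ℝ)*A := by nlinarith
  have hden : (0:ℝ) < (m:ℝ) + A + (m:ℝ)*A := by linarith
  set a : ℝ := A / ((m:ℝ) + A) with ha
  have ha0 : 0 < a := by rw [ha]; positivity
  have ha1 : a < 1 := by rw [ha, div_lt_one hmA]; linarith
  set L : ℝ := ((m:ℝ) + A) / ((m:ℝ) + A + (m:ℝ)*A) with hLdef
  have hL : L * (1 + m*a) = 1 := by
    rw [hLdef, ha]
    field_simp
  set S : ℕ → ℝ := fun t => ∑ i ∈ Finset.Icc 1 t, P 0 i t with hS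
  have hS1 : S 1 = 0 := by
    simp only [hS]
    rw [Finset.Icc_self, Finset.sum_singleton, hP11 0]
    have h0m : ¬ ((0:ℕ) = m) := by omega
    simp [h0m]
  have hstep : ∀ i t : ℕ, 1 ≤ i → i ≤ t →
      P 0 i (t+1) = (1 - a/(t:ℝ))^m * P 0 i t := by
    intro i t hi hit
    rw [hPrec 0 i t hi hit]
    rw [Nat.min_zero, Finset.Icc_self, Finset.sum_singleton]
    have harg : ((0:ℕ):ℝ) - ((0:ℕ):ℝ) + A = A := by norm_num
    simp only [Nat.choose_zero_right, Nat.cast_one, pow_zero, Nat.sub_zero, harg,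
      Nat.cast_zero, Nat.sub_self]
    rw [ha, div_div]
    norm_num
  have hSrec : ∀ t : ℕ, 1 ≤ t → S (t+1) = 1 + (1 - a/(t:ℝ))^m * S t := by
    intro t ht
    simp only [hS]
    rw [Finset.sum_Icc_succ_top (by omega : 1 ≤ t+1), hPii 0 (t+1) (by omega),
      if_pos rfl, Finset.mul_sum, add_comm]
    congr 1
    apply Finset.sum_congr rfl
    intro i hi
    rw [Finset.mem_Icc] at hi
    exact hstep i t hi.1 hi.2
  have hmain := main_rec_aux m a L ha0 ha1 hL S hS1 hSrec
  apply hmain.congr'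
  filter_upwards [eventually_ge_atTop 1] with t ht
  rw [hPnet 0 t ht]
  simp only [hS]
  ring
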